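/- Let A₁ ∈ ℂ^{M₁×N₁} and A₂ ∈ ℂ^{M₂×N₂}, and let the Kronecker product A = A₁ ⊗ A₂ ∈ ℂ^{M₁M₂×N₁N₂} act on 3-level block vectors in ℂ^{N₁'·N₂'·N₃'} where N₁ = N₁' and N₂ = N₂'N₃' (so the level-1 blocks of size N₂ correspond to the columns of A₁). Then for any tuple s = (s₁,s₂,s₃) of positive integers with s₁ ≤ N₁', s₂ ≤ N₂', s₃ ≤ N₃', the hierarchical restricted isometry constant satisfies δ_{(s₁,s₂,s₃)}(A₁ ⊗ A₂) ≤ (1 + δ_{s₁}(A₁))(1 + δ_{s₂s₃}(A₂)) − 1. -/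
import Mathlib

open scoped Classical

noncomputable section

/-- A vector is `s`-sparse if at most `s` of its entries are nonzero. -/
def Sparse {ι : Type*} [Fintype ι] (s : ℕ) (x : ι → ℂ) : Prop :=
  (Finset.univ.filter fun i => x i ≠ 0).card ≤ s

/-- Squared Euclidean norm. -/
def sqNorm {ι : Type*} [Fintype ι] (x : ι → ℂ) : ℝ := ∑ i, ‖x i‖ ^ 2

/-- Euclidean norm. -/
def enorm {ι : Type*} [Fintype ι] (x : ι → ℂ) : ℝ := Real.sqrt (sqNorm x)

/-- The restricted isometry constant `δ_s(A)`: the smallest `δ ≥ 0` such that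
`(1−δ)‖x‖² ≤ ‖Ax‖² ≤ (1+δ)‖x‖²` for every `s`-sparse `x`. -/
def RIPconst {m n : Type*} [Fintype m] [Fintype n] (A : Matrix m n ℂ) (s : ℕ) : ℝ :=
  sInf {δ : ℝ | 0 ≤ δ ∧ ∀ x : n → ℂ, Sparse s x →
    (1 - δ) * sqNorm x ≤ sqNorm (A.mulVec x) ∧ sqNorm (A.mulVec x) ≤ (1 + δ) * sqNorm x}

/-- `(s₁,s₂,s₃)`-hierarchical sparsity of a 3-level block vector: at most `s₁`
of the `N₁` level-1 blocks are nonzero, within each block at most `s₂` of the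
`N₂` level-2 blocks are nonzero, and each of those contains at most `s₃`
nonzero entries. -/
def HiSparse3 {N₁ N₂ N₃ : ℕ} (s₁ s₂ s₃ : ℕ) (x : Fin N₁ × Fin N₂ × Fin N₃ → ℂ) : Prop :=
  (Finset.univ.filter fun i₁ : Fin N₁ => (fun p : Fin N₂ × Fin N₃ => x (i₁, p)) ≠ 0).card ≤ s₁ ∧
  ∀ i₁ : Fin N₁,
    (Finset.univ.filter fun i₂ : Fin N₂ => (fun i₃ : Fin N₃ => x (i₁, i₂, i₃)) ≠ 0).card ≤ s₂ ∧
    ∀ i₂ : Fin N₂, Sparse s₃ (fun i₃ : Fin N₃ => x (i₁, i₂, i₃))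

/-- The hierarchical restricted isometry constant `δ_{(s₁,s₂,s₃)}(A)` of a
matrix acting on 3-level block vectors. -/
def HiRIPconst3 {m : Type*} [Fintype m] {N₁ N₂ N₃ : ℕ}
    (A : Matrix m (Fin N₁ × Fin N₂ × Fin N₃) ℂ) (s₁ s₂ s₃ : ℕ) : ℝ :=
  sInf {δ : ℝ | 0 ≤ δ ∧ ∀ x : Fin N₁ × Fin N₂ × Fin N₃ → ℂ, HiSparse3 s₁ s₂ s₃ x →
    (1 - δ) * sqNorm x ≤ sqNorm (A.mulVec x) ∧ sqNorm (A.mulVec x) ≤ (1 + δ) * sqNorm x}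

lemma sqNorm_nonneg' {ι : Type*} [Fintype ι] (x : ι → ℂ) : 0 ≤ sqNorm x :=
  Finset.sum_nonneg fun _ _ => sq_nonneg _

lemma ripset_nonempty {m n : Type*} [Fintype m] [Fintype n] (A : Matrix m n ℂ) (s : ℕ) :
    Set.Nonempty {δ : ℝ | 0 ≤ δ ∧ ∀ x : n → ℂ, Sparse s x →
      (1 - δ) * sqNorm x ≤ sqNorm (A.mulVec x) ∧ sqNorm (A.mulVec x) ≤ (1 + δ) * sqNorm x} := by
  classical
  set C : ℝ := ∑ r : m, ∑ j : n, ‖A r j‖ ^ 2 with hCdef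
  have hC0 : 0 ≤ C := Finset.sum_nonneg fun r _ => Finset.sum_nonneg fun j _ => sq_nonneg _
  refine ⟨max 1 C, le_trans zero_le_one (le_max_left _ _), fun x _ => ⟨?_, ?_⟩⟩
  · have h1 : 1 - max 1 C ≤ 0 := by
      have := le_max_left 1 C; linarith
    calc (1 - max 1 C) * sqNorm x ≤ 0 :=
          mul_nonpos_of_nonpos_of_nonneg h1 (sqNorm_nonneg' x)
      _ ≤ sqNorm (A.mulVec x) := sqNorm_nonneg' _
  · have key : sqNorm (A.mulVec x) ≤ C * sqNorm x := by
      have hrow : ∀ r : m, ‖A.mulVec x r‖ ^ 2 ≤ (∑ j, ‖A r j‖ ^ 2) * sqNorm x := by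
        intro r
        have h1 : ‖A.mulVec x r‖ ≤ ∑ j, ‖A r j‖ * ‖x j‖ := by
          calc ‖A.mulVec x r‖ = ‖∑ j, A r j * x j‖ := by
                simp [Matrix.mulVec, dotProduct]
            _ ≤ ∑ j, ‖A r j * x j‖ := norm_sum_le _ _
            _ = ∑ j, ‖A r j‖ * ‖x j‖ := by simp [norm_mul]
        have h2 : ‖A.mulVec x r‖ ^ 2 ≤ (∑ j, ‖A r j‖ * ‖x j‖) ^ 2 :=
          pow_le_pow_left₀ (norm_nonneg _) h1 2
        exact h2.trans (Finset.sum_mul_sq_le_sq_mul_sq _ _ _)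
      calc sqNorm (A.mulVec x) = ∑ r, ‖A.mulVec x r‖ ^ 2 := rfl
        _ ≤ ∑ r : m, (∑ j, ‖A r j‖ ^ 2) * sqNorm x := Finset.sum_le_sum fun r _ => hrow r
        _ = C * sqNorm x := by rw [← Finset.sum_mul]
    have hCle : C ≤ 1 + max 1 C := by have := le_max_right 1 C; linarith
    calc sqNorm (A.mulVec x) ≤ C * sqNorm x := key
      _ ≤ (1 + max 1 C) * sqNorm x := mul_le_mul_of_nonneg_right hCle (sqNorm_nonneg' x)

lemma hi_core (M₁ M₂ N₁' N₂' N₃' s₁ s₂ s₃ : ℕ)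
    (A₁ : Matrix (Fin M₁) (Fin N₁') ℂ) (A₂ : Matrix (Fin M₂) (Fin N₂' × Fin N₃') ℂ)
    (A : Matrix (Fin M₁ × Fin M₂) (Fin N₁' × Fin N₂' × Fin N₃') ℂ)
    (hA : A = fun r j => A₁ r.1 j.1 * A₂ r.2 j.2)
    (d₁ d₂ : ℝ) (hd₁ : 0 ≤ d₁) (hd₂ : 0 ≤ d₂)
    (h₁ : ∀ v : Fin N₁' → ℂ, Sparse s₁ v →
      (1 - d₁) * sqNorm v ≤ sqNorm (A₁.mulVec v) ∧ sqNorm (A₁.mulVec v) ≤ (1 + d₁) * sqNorm v)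
    (h₂ : ∀ v : Fin N₂' × Fin N₃' → ℂ, Sparse (s₂ * s₃) v →
      (1 - d₂) * sqNorm v ≤ sqNorm (A₂.mulVec v) ∧ sqNorm (A₂.mulVec v) ≤ (1 + d₂) * sqNorm v)
    (x : Fin N₁' × Fin N₂' × Fin N₃' → ℂ) (hx : HiSparse3 s₁ s₂ s₃ x) :
    (1 - ((1 + d₁) * (1 + d₂) - 1)) * sqNorm x ≤ sqNorm (A.mulVec x) ∧
      sqNorm (A.mulVec x) ≤ (1 + ((1 + d₁) * (1 + d₂) - 1)) * sqNorm x := by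
  classical
  -- blocks are (s₂*s₃)-sparse
  have hxb : ∀ j : Fin N₁', Sparse (s₂ * s₃) (fun p : Fin N₂' × Fin N₃' => x (j, p)) := by
    intro j
    obtain ⟨h2, h3⟩ := hx.2 j
    unfold Sparse
    have hcard : (Finset.univ.filter fun p : Fin N₂' × Fin N₃' => x (j, p) ≠ 0).card
        = ∑ i₂ : Fin N₂', (Finset.univ.filter fun i₃ : Fin N₃' => x (j, i₂, i₃) ≠ 0).card := by
      rw [Finset.card_filter, ← Finset.univ_product_univ, Finset.sum_product]
      exact Finset.sum_congr rfl fun i₂ _ => by rw [Finset.card_filter]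
    rw [hcard]
    set F₂ := Finset.univ.filter fun i₂ : Fin N₂' => (fun i₃ : Fin N₃' => x (j, i₂, i₃)) ≠ 0
      with hF₂
    have hzero : ∀ i₂ ∈ (Finset.univ : Finset (Fin N₂')), i₂ ∉ F₂ →
        (Finset.univ.filter fun i₃ : Fin N₃' => x (j, i₂, i₃) ≠ 0).card = 0 := by
      intro i₂ _ hi₂
      rw [hF₂] at hi₂
      simp only [Finset.mem_filter, Finset.mem_univ, true_and, not_not] at hi₂
      rw [Finset.card_eq_zero, Finset.filter_eq_empty_iff]
      intro i₃ _
      simp only [not_not]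
      exact congrFun hi₂ i₃
    rw [← Finset.sum_subset (Finset.filter_subset _ _) hzero]
    calc ∑ i₂ ∈ F₂, (Finset.univ.filter fun i₃ : Fin N₃' => x (j, i₂, i₃) ≠ 0).card
        ≤ ∑ _i₂ ∈ F₂, s₃ := Finset.sum_le_sum fun i₂ _ => h3 i₂
      _ = F₂.card * s₃ := by rw [Finset.sum_const, smul_eq_mul]
      _ ≤ s₂ * s₃ := Nat.mul_le_mul_right _ h2
  -- the intermediate vector
  set y : Fin M₂ → Fin N₁' → ℂ :=
    fun r₂ j => A₂.mulVec (fun p => x (j, p)) r₂ with hy_def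
  have hy : ∀ r₂ : Fin M₂, Sparse s₁ (y r₂) := by
    intro r₂
    refine le_trans (Finset.card_le_card ?_) hx.1
    intro j hj
    simp only [Finset.mem_filter, Finset.mem_univ, true_and] at hj ⊢
    intro hblock
    apply hj
    show A₂.mulVec (fun p => x (j, p)) r₂ = 0
    rw [hblock, Matrix.mulVec_zero]
    rfl
  have hAx : ∀ r : Fin M₁ × Fin M₂, A.mulVec x r = A₁.mulVec (y r.2) r.1 := by
    intro r
    subst hA
    show (∑ q : Fin N₁' × Fin N₂' × Fin N₃', A₁ r.1 q.1 * A₂ r.2 q.2 * x q)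
      = ∑ j : Fin N₁', A₁ r.1 j * y r.2 j
    rw [Fintype.sum_prod_type]
    refine Finset.sum_congr rfl fun j _ => ?_
    show ∑ p : Fin N₂' × Fin N₃', A₁ r.1 j * A₂ r.2 p * x (j, p)
      = A₁ r.1 j * ∑ p : Fin N₂' × Fin N₃', A₂ r.2 p * x (j, p)
    rw [Finset.mul_sum]
    exact Finset.sum_congr rfl fun p _ => by ring
  have hsum1 : sqNorm (A.mulVec x) = ∑ r₂ : Fin M₂, sqNorm (A₁.mulVec (y r₂)) := by
    calc sqNorm (A.mulVec x)
        = ∑ r₁ : Fin M₁, ∑ r₂ : Fin M₂, ‖A₁.mulVec (y r₂) r₁‖ ^ 2 := by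
          rw [sqNorm, Fintype.sum_prod_type]
          exact Finset.sum_congr rfl fun r₁ _ => Finset.sum_congr rfl fun r₂ _ => by
            rw [hAx (r₁, r₂)]
      _ = ∑ r₂ : Fin M₂, ∑ r₁ : Fin M₁, ‖A₁.mulVec (y r₂) r₁‖ ^ 2 := Finset.sum_comm
      _ = ∑ r₂ : Fin M₂, sqNorm (A₁.mulVec (y r₂)) := rfl
  have hsumy : ∑ r₂ : Fin M₂, sqNorm (y r₂)
      = ∑ j : Fin N₁', sqNorm (A₂.mulVec (fun p => x (j, p))) := Finset.sum_comm
  have hsumx : sqNorm x = ∑ j : Fin N₁', sqNorm (fun p : Fin N₂' × Fin N₃' => x (j, p)) := by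
    rw [sqNorm, Fintype.sum_prod_type]
    rfl
  have hXnn : 0 ≤ sqNorm x := sqNorm_nonneg' x
  have hYnn : 0 ≤ ∑ r₂ : Fin M₂, sqNorm (y r₂) :=
    Finset.sum_nonneg fun r₂ _ => sqNorm_nonneg' _
  have hZY1 : (1 - d₁) * (∑ r₂ : Fin M₂, sqNorm (y r₂)) ≤ sqNorm (A.mulVec x) := by
    rw [hsum1, Finset.mul_sum]
    exact Finset.sum_le_sum fun r₂ _ => (h₁ (y r₂) (hy r₂)).1
  have hZY2 : sqNorm (A.mulVec x) ≤ (1 + d₁) * (∑ r₂ : Fin M₂, sqNorm (y r₂)) := by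
    rw [hsum1, Finset.mul_sum]
    exact Finset.sum_le_sum fun r₂ _ => (h₁ (y r₂) (hy r₂)).2
  have hYX1 : (1 - d₂) * sqNorm x ≤ ∑ r₂ : Fin M₂, sqNorm (y r₂) := by
    rw [hsumy, hsumx, Finset.mul_sum]
    exact Finset.sum_le_sum fun j _ => (h₂ _ (hxb j)).1
  have hYX2 : (∑ r₂ : Fin M₂, sqNorm (y r₂)) ≤ (1 + d₂) * sqNorm x := by
    rw [hsumy, hsumx, Finset.mul_sum]
    exact Finset.sum_le_sum fun j _ => (h₂ _ (hxb j)).2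
  constructor
  · nlinarith [mul_le_mul_of_nonneg_left hYX2 hd₁]
  · nlinarith [mul_le_mul_of_nonneg_left hYX2 (by linarith : (0:ℝ) ≤ 1 + d₁)]

theorem hiRIP_kronecker_outer (M₁ M₂ N₁' N₂' N₃' s₁ s₂ s₃ : ℕ)
    (hs₁ : 0 < s₁) (hs₂ : 0 < s₂) (hs₃ : 0 < s₃)
    (hN₁ : s₁ ≤ N₁') (hN₂ : s₂ ≤ N₂') (hN₃ : s₃ ≤ N₃')
    (A₁ : Matrix (Fin M₁) (Fin N₁') ℂ) (A₂ : Matrix (Fin M₂) (Fin N₂' × Fin N₃') ℂ)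
    (A : Matrix (Fin M₁ × Fin M₂) (Fin N₁' × Fin N₂' × Fin N₃') ℂ)
    (hA : A = fun r j => A₁ r.1 j.1 * A₂ r.2 j.2) :
    HiRIPconst3 A s₁ s₂ s₃ ≤ (1 + RIPconst A₁ s₁) * (1 + RIPconst A₂ (s₂ * s₃)) - 1 := by
  classical
  set S₁ := {δ : ℝ | 0 ≤ δ ∧ ∀ x : Fin N₁' → ℂ, Sparse s₁ x →
    (1 - δ) * sqNorm x ≤ sqNorm (A₁.mulVec x) ∧
      sqNorm (A₁.mulVec x) ≤ (1 + δ) * sqNorm x} with hS₁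
  set S₂ := {δ : ℝ | 0 ≤ δ ∧ ∀ x : Fin N₂' × Fin N₃' → ℂ, Sparse (s₂ * s₃) x →
    (1 - δ) * sqNorm x ≤ sqNorm (A₂.mulVec x) ∧
      sqNorm (A₂.mulVec x) ≤ (1 + δ) * sqNorm x} with hS₂
  have hne₁ : S₁.Nonempty := ripset_nonempty A₁ s₁
  have hne₂ : S₂.Nonempty := ripset_nonempty A₂ (s₂ * s₃)
  have hδ₁ : RIPconst A₁ s₁ = sInf S₁ := rfl
  have hδ₂ : RIPconst A₂ (s₂ * s₃) = sInf S₂ := rfl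
  have hδ₁nn : 0 ≤ RIPconst A₁ s₁ := by
    rw [hδ₁]; exact Real.sInf_nonneg fun d hd => hd.1
  have hδ₂nn : 0 ≤ RIPconst A₂ (s₂ * s₃) := by
    rw [hδ₂]; exact Real.sInf_nonneg fun d hd => hd.1
  set H := HiRIPconst3 A s₁ s₂ s₃ with hH
  have hle : ∀ d₁ ∈ S₁, ∀ d₂ ∈ S₂, H ≤ (1 + d₁) * (1 + d₂) - 1 := by
    intro d₁ hd₁ d₂ hd₂
    rw [hH, HiRIPconst3]
    apply csInf_le ⟨0, fun d hd => hd.1⟩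
    refine ⟨by nlinarith [hd₁.1, hd₂.1], fun x hx => ?_⟩
    exact hi_core M₁ M₂ N₁' N₂' N₃' s₁ s₂ s₃ A₁ A₂ A hA d₁ d₂ hd₁.1 hd₂.1 hd₁.2 hd₂.2 x hx
  have step1 : ∀ d₂ ∈ S₂, H + 1 ≤ (1 + RIPconst A₁ s₁) * (1 + d₂) := by
    intro d₂ hd₂
    have hpos : (0:ℝ) < 1 + d₂ := by have := hd₂.1; linarith
    have key : (H + 1) / (1 + d₂) - 1 ≤ RIPconst A₁ s₁ := by
      rw [hδ₁]
      apply le_csInf hne₁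
      intro d₁ hd₁
      rw [sub_le_iff_le_add, div_le_iff₀ hpos]
      calc H + 1 ≤ (1 + d₁) * (1 + d₂) := by linarith [hle d₁ hd₁ d₂ hd₂]
        _ = (d₁ + 1) * (1 + d₂) := by ring
    have h2 : (H + 1) / (1 + d₂) ≤ 1 + RIPconst A₁ s₁ := by linarith
    calc H + 1 = (H + 1) / (1 + d₂) * (1 + d₂) := by field_simp
      _ ≤ (1 + RIPconst A₁ s₁) * (1 + d₂) := mul_le_mul_of_nonneg_right h2 hpos.le
  have hpos₁ : (0:ℝ) < 1 + RIPconst A₁ s₁ := by linarith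
  have key2 : (H + 1) / (1 + RIPconst A₁ s₁) - 1 ≤ RIPconst A₂ (s₂ * s₃) := by
    rw [hδ₂]
    apply le_csInf hne₂
    intro d₂ hd₂
    rw [sub_le_iff_le_add, div_le_iff₀ hpos₁]
    calc H + 1 ≤ (1 + RIPconst A₁ s₁) * (1 + d₂) := step1 d₂ hd₂
      _ = (d₂ + 1) * (1 + RIPconst A₁ s₁) := by ring
  have h3 : (H + 1) / (1 + RIPconst A₁ s₁) ≤ 1 + RIPconst A₂ (s₂ * s₃) := by linarith
  have h4 : H + 1 ≤ (1 + RIPconst A₁ s₁) * (1 + RIPconst A₂ (s₂ * s₃)) := by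
    calc H + 1 = (H + 1) / (1 + RIPconst A₁ s₁) * (1 + RIPconst A₁ s₁) := by field_simp
      _ ≤ (1 + RIPconst A₂ (s₂ * s₃)) * (1 + RIPconst A₁ s₁) :=
          mul_le_mul_of_nonneg_right h3 hpos₁.le
      _ = (1 + RIPconst A₁ s₁) * (1 + RIPconst A₂ (s₂ * s₃)) := by ring
  linarith
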